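/- For every ε ∈ (0, 1/2) and δ ∈ (0, 1), any learning algorithm that (ε,δ)-PAC learns a concept class C containing two classifiers h₀, h₁ and a point x* with h₀(x*) ≠ h₁(x*) requires at least ((1−ε)/ε)·ln(1/δ) samples. More precisely, if m < ((1−ε)/ε)·ln(1/δ), then there exist a target f ∈ {h₀,h₁} and a distribution P such that with probability greater than δ the algorithm's output has error greater than ε. -/

import Mathlib

open MeasureTheory

/-- Lower bound `((1-ε)/ε)·ln(1/δ)` on PAC sample complexity: if
`m < ((1-ε)/ε)·ln(1/δ)`, then for any (deterministic) learning algorithm `A` there are a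
target `f ∈ {h₀, h₁}` and a data distribution `P` under which, with probability greater
than `δ` over the i.i.d. sample, the output of `A` has error greater than `ε`. -/
theorem stmt_13 {𝒳 : Type*} [MeasurableSpace 𝒳] [MeasurableSingletonClass 𝒳]
    (h₀ h₁ : 𝒳 → ℤ) (xstar x₀ : 𝒳) (hdiff : h₀ xstar ≠ h₁ xstar) (hagree : h₀ x₀ = h₁ x₀)
    (ε δ : ℝ) (hε : ε ∈ Set.Ioo (0 : ℝ) (1 / 2)) (hδ : δ ∈ Set.Ioo (0 : ℝ) 1)
    (A : (m : ℕ) → (Fin m → 𝒳 × ℤ) → 𝒳 → ℤ)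
    (m : ℕ) (hm : (m : ℝ) < ((1 - ε) / ε) * Real.log (1 / δ)) :
    ∃ f ∈ ({h₀, h₁} : Set (𝒳 → ℤ)), ∃ P : Measure 𝒳, IsProbabilityMeasure P ∧
      δ < ((Measure.pi fun _ : Fin m => P)
        {S | ε < (P {x | A m (fun i => (S i, f (S i))) x ≠ f x}).toReal}).toReal := by
  obtain ⟨hε0, hεhalf⟩ := hε
  obtain ⟨hδ0, hδ1⟩ := hδ
  have hε1 : ε < 1 := hεhalf.trans (by norm_num)
  have h1ε : (0:ℝ) < 1 - ε := by linarith
  -- Step 1: δ < (1-ε)^m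
  have hlog1 : Real.log (1 / (1 - ε)) ≤ ε / (1 - ε) := by
    have := Real.log_le_sub_one_of_pos (x := 1 / (1 - ε)) (by positivity)
    have : Real.log (1 / (1 - ε)) ≤ 1 / (1 - ε) - 1 := this
    have heq : 1 / (1 - ε) - 1 = ε / (1 - ε) := by field_simp; ring
    linarith [heq ▸ this]
  have hL0 : 0 < Real.log (1 / δ) := by
    apply Real.log_pos
    rw [lt_div_iff₀ hδ0]; linarith
  have hm2 : (m : ℝ) * (ε / (1 - ε)) < Real.log (1 / δ) := by
    have h : (m : ℝ) * (ε / (1 - ε)) < (((1 - ε) / ε) * Real.log (1 / δ)) * (ε / (1 - ε)) := by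
      apply mul_lt_mul_of_pos_right hm (by positivity)
    have heq : (((1 - ε) / ε) * Real.log (1 / δ)) * (ε / (1 - ε)) = Real.log (1 / δ) := by
      field_simp
    linarith [heq ▸ h]
  have hmlog : (m : ℝ) * Real.log (1 / (1 - ε)) < Real.log (1 / δ) := by
    calc (m : ℝ) * Real.log (1 / (1 - ε)) ≤ (m : ℝ) * (ε / (1 - ε)) := by
          apply mul_le_mul_of_nonneg_left hlog1 (Nat.cast_nonneg m)
      _ < Real.log (1 / δ) := hm2
  have hpow : δ < (1 - ε) ^ m := by
    have hlogpow : Real.log δ < Real.log ((1 - ε) ^ m) := by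
      rw [Real.log_pow]
      rw [Real.log_div one_ne_zero (ne_of_gt h1ε), Real.log_one] at hmlog
      rw [Real.log_div one_ne_zero (ne_of_gt hδ0), Real.log_one] at hmlog
      push_cast
      linarith
    exact (Real.log_lt_log_iff hδ0 (by positivity)).mp hlogpow
  -- Step 2: pick p ∈ (ε,1) with δ < (1-p)^m
  obtain ⟨p, hpδ, hpε, hp1⟩ : ∃ p : ℝ, δ < (1 - p) ^ m ∧ ε < p ∧ p < 1 := by
    have hcont : Continuous fun p : ℝ => (1 - p) ^ m := by continuity
    have hopen : IsOpen {p : ℝ | δ < (1 - p) ^ m} :=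
      isOpen_lt continuous_const hcont
    have hmemcl : ε ∈ closure (Set.Ioo ε 1) := by
      rw [closure_Ioo (ne_of_lt hε1)]
      exact ⟨le_refl _, hε1.le⟩
    rcases mem_closure_iff.mp hmemcl _ hopen hpow with ⟨p, hp1, hp2⟩
    exact ⟨p, hp1, hp2.1, hp2.2⟩
  have hp0 : 0 < p := hε0.trans hpε
  have h1p : 0 ≤ 1 - p := by linarith
  -- the distribution
  set P : Measure 𝒳 :=
    ENNReal.ofReal (1 - p) • Measure.dirac x₀ + ENNReal.ofReal p • Measure.dirac xstar with hP
  have hxne : xstar ≠ x₀ := by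
    intro h; exact hdiff (h ▸ hagree)
  have hPprob : IsProbabilityMeasure P := by
    constructor
    rw [hP]
    simp [Measure.add_apply, Measure.smul_apply, smul_eq_mul]
    rw [← ENNReal.ofReal_add h1p hp0.le]
    norm_num
  have hPxstar : P {xstar} = ENNReal.ofReal p := by
    rw [hP]
    simp only [Measure.add_apply, Measure.smul_apply, smul_eq_mul,
      Measure.dirac_apply' _ (measurableSet_singleton xstar)]
    rw [Set.indicator_of_notMem (by simpa using hxne.symm),
      Set.indicator_of_mem (Set.mem_singleton _)]
    simp
  have hPx0 : P {x₀} = ENNReal.ofReal (1 - p) := by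
    rw [hP]
    simp only [Measure.add_apply, Measure.smul_apply, smul_eq_mul,
      Measure.dirac_apply' _ (measurableSet_singleton x₀)]
    rw [Set.indicator_of_mem (Set.mem_singleton _),
      Set.indicator_of_notMem (by simpa using hxne)]
    simp
  -- the output on the all-x₀ sample
  set g : 𝒳 → ℤ := A m (fun _ => (x₀, h₀ x₀)) with hg
  -- pick target f
  obtain ⟨f, hfmem, hfx0, hgf⟩ :
      ∃ f, f ∈ ({h₀, h₁} : Set (𝒳 → ℤ)) ∧ f x₀ = h₀ x₀ ∧ g xstar ≠ f xstar := by
    by_cases hcase : g xstar = h₀ xstar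
    · exact ⟨h₁, Or.inr rfl, hagree.symm, fun h => hdiff (hcase ▸ h)⟩
    · exact ⟨h₀, Or.inl rfl, rfl, hcase⟩
  refine ⟨f, hfmem, P, hPprob, ?_⟩
  -- event: all samples equal x₀
  set E : Set (Fin m → 𝒳) := Set.pi Set.univ (fun _ => {x₀}) with hE
  have hEsub : E ⊆ {S | ε < (P {x | A m (fun i => (S i, f (S i))) x ≠ f x}).toReal} := by
    intro S hS
    have hSi : ∀ i, S i = x₀ := fun i => hS i (Set.mem_univ i)
    have hout : A m (fun i => (S i, f (S i))) = g := by
      have harg : (fun i => (S i, f (S i))) = (fun _ : Fin m => (x₀, h₀ x₀)) := by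
        funext i; rw [hSi i, hfx0]
      rw [hg, harg]
    have hsub : ({xstar} : Set 𝒳) ⊆ {x | A m (fun i => (S i, f (S i))) x ≠ f x} := by
      intro x hx
      rw [Set.mem_singleton_iff] at hx
      subst hx
      simpa [hout] using hgf
    have hle : ENNReal.ofReal p ≤ P {x | A m (fun i => (S i, f (S i))) x ≠ f x} := by
      rw [← hPxstar]; exact measure_mono hsub
    have hfin : P {x | A m (fun i => (S i, f (S i))) x ≠ f x} ≠ ⊤ := measure_ne_top P _
    have := ENNReal.toReal_mono hfin hle
    rw [ENNReal.toReal_ofReal hp0.le] at this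
    exact lt_of_lt_of_le hpε this
  have hpiE : (Measure.pi fun _ : Fin m => P) E = ENNReal.ofReal ((1 - p) ^ m) := by
    rw [hE, Measure.pi_pi]
    simp [hPx0, ENNReal.ofReal_pow h1p]
  haveI : IsProbabilityMeasure (Measure.pi fun _ : Fin m => P) :=
    MeasureTheory.Measure.pi.instIsProbabilityMeasure _
  have hfin2 : (Measure.pi fun _ : Fin m => P)
      {S | ε < (P {x | A m (fun i => (S i, f (S i))) x ≠ f x}).toReal} ≠ ⊤ :=
    measure_ne_top _ _
  have hle2 := ENNReal.toReal_mono hfin2 (measure_mono hEsub)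
  rw [hpiE, ENNReal.toReal_ofReal (by positivity)] at hle2
  linarith
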